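/- If the Haar state φ of H is faithful and α is a coaction of H on A with bounded counit condition (id_A ⊗ ε)∘α = id_A, then E = (id_A ⊗ φ)∘α is a faithful conditional expectation from A onto A^α. -/

import Mathlib

open scoped ComplexOrder

/-- A state on a unital C⋆-algebra: a positive unital continuous linear functional. -/
def IsState {H : Type*} [CStarAlgebra H] (φ : H →L[ℂ] ℂ) : Prop :=
  φ 1 = 1 ∧ ∀ x : H, 0 ≤ φ (star x * x)

/-- An element of a C⋆-algebra is positive iff it is of the form `star y * y`. -/
def IsPos {A : Type*} [CStarAlgebra A] (x : A) : Prop := ∃ y : A, x = star y * y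

open scoped CStarAlgebra

theorem aux_dense_ext {T V : Type*} [AddCommMonoid T] [Module ℂ T] [TopologicalSpace T]
    [TopologicalSpace V] [T2Space V]
    {S : Set T} (hd : closure (Submodule.span ℂ S : Set T) = Set.univ)
    {f g : T → V} (hf : Continuous f) (hg : Continuous g)
    (h : ∀ t ∈ Submodule.span ℂ S, f t = g t) (t : T) : f t = g t := by
  have hmem : t ∈ closure (Submodule.span ℂ S : Set T) := by
    rw [hd]; exact Set.mem_univ t
  exact Set.EqOn.closure h hf hg hmem

theorem aux_state_conj {H : Type*} [CStarAlgebra H] (φ : H →L[ℂ] ℂ)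
    (hφ : ∀ x : H, 0 ≤ φ (star x * x)) (x y : H) :
    φ (star x * y) = starRingEnd ℂ (φ (star y * x)) := by
  have him : ∀ z : H, (φ (star z * z)).im = 0 := fun z => ((Complex.nonneg_iff.mp (hφ z)).2).symm
  have e1 : star (x + y) * (x + y)
      = star x * x + star x * y + star y * x + star y * y := by
    rw [star_add]; noncomm_ring
  have e2 : star (x + Complex.I • y) * (x + Complex.I • y)
      = star x * x + Complex.I • (star x * y) + (-Complex.I) • (star y * x)
        + ((-Complex.I) * Complex.I) • (star y * y) := by
    rw [star_add, star_smul, RCLike.star_def, Complex.conj_I]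
    rw [add_mul, mul_add, mul_add]
    simp only [smul_mul_assoc, mul_smul_comm, smul_smul]
    module
  have h1 : (φ (star x * y)).im + (φ (star y * x)).im = 0 := by
    have := him (x + y)
    rw [e1] at this
    simp only [map_add, Complex.add_im, him x, him y] at this
    linarith
  have h2 : (φ (star x * y)).re - (φ (star y * x)).re = 0 := by
    have := him (x + Complex.I • y)
    rw [e2] at this
    simp only [map_add, map_smul, smul_eq_mul, Complex.add_im, Complex.mul_im, him x, him y,
      Complex.I_re, Complex.I_im, Complex.neg_re, Complex.neg_im, neg_mul, neg_neg,
      Complex.mul_re] at this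
    ring_nf at this ⊢
    linarith
  apply Complex.ext
  · simpa using by linarith
  · simp only [Complex.conj_im]; linarith

theorem aux_gram {A : Type*} {H : Type*} [CStarAlgebra A] [PartialOrder A] [StarOrderedRing A]
    [CStarAlgebra H] (φ : H →L[ℂ] ℂ) (hφ : ∀ x : H, 0 ≤ φ (star x * x))
    {n : ℕ} (a : Fin n → A) (h : Fin n → H) :
    0 ≤ ∑ i, ∑ j, φ (star (h i) * h j) • (star (a i) * a j) := by
  classical
  set M : Matrix (Fin n) (Fin n) ℂ := Matrix.of fun i j => φ (star (h i) * h j) with hM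
  have hpsd : M.PosSemidef := by
    refine Matrix.PosSemidef.of_dotProduct_mulVec_nonneg ?_ ?_
    · ext i j
      simp only [Matrix.conjTranspose_apply, hM, Matrix.of_apply]
      rw [RCLike.star_def]
      exact (aux_state_conj φ hφ (h i) (h j)).symm
    · intro x
      have key : dotProduct (star x) (M.mulVec x)
          = φ (star (∑ i, x i • h i) * (∑ j, x j • h j)) := by
        rw [star_sum, Finset.sum_mul]
        simp only [Finset.mul_sum, star_smul, smul_mul_assoc, mul_smul_comm, smul_smul,
          map_sum, map_smul, smul_eq_mul, RCLike.star_def]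
        simp only [dotProduct, Matrix.mulVec, hM, Matrix.of_apply, Pi.star_apply,
          RCLike.star_def]
        refine Finset.sum_congr rfl fun i _ => ?_
        rw [Finset.mul_sum]
        refine Finset.sum_congr rfl fun j _ => ?_
        ring
      rw [key]
      exact hφ _
  obtain ⟨B, hB⟩ : ∃ B : Matrix (Fin n) (Fin n) ℂ, M = Matrix.conjTranspose B * B := by
    open scoped MatrixOrder Matrix.Norms.L2Operator in
    exact CStarAlgebra.nonneg_iff_eq_star_mul_self.mp hpsd.nonneg
  have hentry : ∀ i j, φ (star (h i) * h j) = ∑ k, starRingEnd ℂ (B k i) * B k j := by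
    intro i j
    have := congrFun (congrFun hB i) j
    simpa [Matrix.mul_apply, Matrix.conjTranspose_apply, hM, RCLike.star_def] using this
  have expand : ∀ k, star (∑ i, B k i • a i) * (∑ j, B k j • a j)
      = ∑ i, ∑ j, (starRingEnd ℂ (B k i) * B k j) • (star (a i) * a j) := by
    intro k
    rw [star_sum, Finset.sum_mul]
    refine Finset.sum_congr rfl fun i _ => ?_
    rw [Finset.mul_sum]
    refine Finset.sum_congr rfl fun j _ => ?_
    rw [star_smul, smul_mul_assoc, mul_smul_comm, smul_smul, RCLike.star_def]
  have main : ∑ i, ∑ j, φ (star (h i) * h j) • (star (a i) * a j)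
      = ∑ k, star (∑ i, B k i • a i) * (∑ j, B k j • a j) := by
    calc ∑ i, ∑ j, φ (star (h i) * h j) • (star (a i) * a j)
        = ∑ i, ∑ j, ∑ k, (starRingEnd ℂ (B k i) * B k j) • (star (a i) * a j) := by
          simp only [hentry, Finset.sum_smul]
      _ = ∑ i, ∑ k, ∑ j, (starRingEnd ℂ (B k i) * B k j) • (star (a i) * a j) := by
          exact Finset.sum_congr rfl fun i _ => Finset.sum_comm
      _ = ∑ k, ∑ i, ∑ j, (starRingEnd ℂ (B k i) * B k j) • (star (a i) * a j) :=
          Finset.sum_comm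
      _ = ∑ k, star (∑ i, B k i • a i) * (∑ j, B k j • a j) := by
          exact Finset.sum_congr rfl fun k _ => (expand k).symm
  rw [main]
  exact Finset.sum_nonneg fun k _ => star_mul_self_nonneg _

set_option maxHeartbeats 1000000 in
/-- If the Haar state `φ` of `H` is faithful and `α` is a coaction
of `H` on `A` with bounded counit condition `(id_A ⊗ ε) ∘ α = id_A`, then
`E = (id_A ⊗ φ) ∘ α` is a faithful conditional expectation from `A` onto the fixed-point
algebra `A^α = {a : α a = a ⊗ 1_H}` (in `T2 ≅ A ⊗ H`, the condition `α a = a ⊗ 1_H`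
reads `α a = jA a`): `E` is faithful, idempotent, positive, contractive, has range
exactly `A^α`, and is an `A^α`-bimodule map.

The minimal tensor product `T2 ≅ A ⊗_min H` is further equipped with the slice maps
`R ψ = ψ ⊗ id_H` over states `ψ` of `A`, which are positive and jointly faithful on
positive elements (this characterizes the spatial tensor norm).

Tensor products are presented by C⋆-algebras with commuting ⋆-homomorphic copies of the
factors with dense span: `T2 ≅ A ⊗ H` (via `jA, jH`), `TH2 ≅ H ⊗ H` (via `d₁, d₂`),
`T3 ≅ A ⊗ H ⊗ H` (via `k₁, k₂, k₃`), with leg embeddings `m₁₂, m₂₃`; `β = α ⊗ id_H`,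
`γ = id_A ⊗ δ`; the slice maps `Φ = id_A ⊗ φ`, `Φ₂ = id_{A⊗H} ⊗ φ` and
`P₁ = id_H ⊗ φ`, `P₂ = φ ⊗ id_H` are continuous linear maps determined on elementary
tensors, and `φ` is the Haar state: `(φ ⊗ id) ∘ δ = (id ⊗ φ) ∘ δ = φ(·)·1`. -/
theorem coaction_slice_faithful_conditional_expectation
    {A : Type*} [CStarAlgebra A] {H : Type*} [CStarAlgebra H]
    {TH2 : Type*} [CStarAlgebra TH2] {T2 : Type*} [CStarAlgebra T2]
    {T3 : Type*} [CStarAlgebra T3]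
    -- H ⊗ H
    (d₁ d₂ : H →⋆ₐ[ℂ] TH2)
    (hdcomm : ∀ x y : H, Commute (d₁ x) (d₂ y))
    (hddense : closure (Submodule.span ℂ {t : TH2 | ∃ x y : H, t = d₁ x * d₂ y} : Set TH2)
      = Set.univ)
    -- A ⊗ H
    (jA : A →⋆ₐ[ℂ] T2) (jH : H →⋆ₐ[ℂ] T2)
    (hjcomm : ∀ (a : A) (h : H), Commute (jA a) (jH h))
    (hjdense : closure
      (Submodule.span ℂ {t : T2 | ∃ (a : A) (h : H), t = jA a * jH h} : Set T2)
      = Set.univ)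
    -- A ⊗ H ⊗ H
    (k₁ : A →⋆ₐ[ℂ] T3) (k₂ k₃ : H →⋆ₐ[ℂ] T3)
    (hkcomm12 : ∀ (a : A) (h : H), Commute (k₁ a) (k₂ h))
    (hkcomm13 : ∀ (a : A) (h : H), Commute (k₁ a) (k₃ h))
    (hkcomm23 : ∀ (h h' : H), Commute (k₂ h) (k₃ h'))
    (hkdense : closure (Submodule.span ℂ
      {t : T3 | ∃ (a : A) (h h' : H), t = k₁ a * k₂ h * k₃ h'} : Set T3) = Set.univ)
    -- leg embeddings
    (m₁₂ : T2 →⋆ₐ[ℂ] T3) (hm₁₂ : ∀ (a : A) (h : H), m₁₂ (jA a * jH h) = k₁ a * k₂ h)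
    (m₂₃ : TH2 →⋆ₐ[ℂ] T3) (hm₂₃ : ∀ h h' : H, m₂₃ (d₁ h * d₂ h') = k₂ h * k₃ h')
    -- comultiplication and coaction
    (δ : H →⋆ₐ[ℂ] TH2) (α : A →⋆ₐ[ℂ] T2)
    (β : T2 →⋆ₐ[ℂ] T3) (hβ : ∀ (a : A) (h : H), β (jA a * jH h) = m₁₂ (α a) * k₃ h)
    (γ : T2 →⋆ₐ[ℂ] T3) (hγ : ∀ (a : A) (h : H), γ (jA a * jH h) = k₁ a * m₂₃ (δ h))
    (hcoact : ∀ a : A, β (α a) = γ (α a))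
    -- the Haar state and its slice maps
    (φ : H →L[ℂ] ℂ) (hφ : IsState φ)
    (P₁ P₂ : TH2 →L[ℂ] H)
    (hP₁ : ∀ h h' : H, P₁ (d₁ h * d₂ h') = φ h' • h)
    (hP₂ : ∀ h h' : H, P₂ (d₁ h * d₂ h') = φ h • h')
    (hHaar₁ : ∀ h : H, P₁ (δ h) = φ h • 1)
    (hHaar₂ : ∀ h : H, P₂ (δ h) = φ h • 1)
    (Φ : T2 →L[ℂ] A) (hΦ : ∀ (a : A) (h : H), Φ (jA a * jH h) = φ h • a)
    (Φ₂ : T3 →L[ℂ] T2)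
    (hΦ₂ : ∀ (a : A) (h h' : H), Φ₂ (k₁ a * k₂ h * k₃ h') = φ h' • (jA a * jH h))
    -- the Haar state is faithful
    (hφfaithful : ∀ h : H, φ (star h * h) = 0 → h = 0)
    -- the bounded counit
    (ε : H →⋆ₐ[ℂ] ℂ)
    (S : T2 →L[ℂ] A) (hS : ∀ (a : A) (h : H), S (jA a * jH h) = ε h • a)
    (hcounit : ∀ a : A, S (α a) = a)
    -- slice maps over states of `A`, witnessing minimality of the tensor norm on `T2`
    (R : (A →L[ℂ] ℂ) → T2 →L[ℂ] H)
    (hRform : ∀ ψ : A →L[ℂ] ℂ, IsState ψ → ∀ (a : A) (h : H), R ψ (jA a * jH h) = ψ a • h)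
    (hRpos : ∀ ψ : A →L[ℂ] ℂ, IsState ψ → ∀ x : T2, IsPos x → IsPos (R ψ x))
    (hRsep : ∀ x : T2, IsPos x → (∀ ψ : A →L[ℂ] ℂ, IsState ψ → R ψ x = 0) → x = 0) :
    let E : A → A := fun a => Φ (α a)
    (∀ a : A, IsPos a → E a = 0 → a = 0) ∧
    (∀ a : A, E (E a) = E a) ∧
    (∀ a : A, IsPos a → IsPos (E a)) ∧
    (∀ a : A, ‖E a‖ ≤ ‖a‖) ∧
    (∀ a : A, α (E a) = jA (E a)) ∧
    (∀ a : A, α a = jA a → E a = a) ∧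
    (∀ a b c : A, α b = jA b → α c = jA c → E (b * a * c) = b * E a * c) := by

  classical
  intro E
  letI : PartialOrder A := CStarAlgebra.spectralOrder A
  letI : StarOrderedRing A := CStarAlgebra.spectralOrderedRing A
  obtain ⟨hφ1, hφpos⟩ := hφ
  -- IsPos is equivalent to nonnegativity in the spectral order
  have isPos_iff : ∀ x : A, IsPos x ↔ 0 ≤ x := by
    intro x
    constructor
    · rintro ⟨y, rfl⟩; exact star_mul_self_nonneg y
    · intro hx
      refine ⟨CFC.sqrt x, ?_⟩
      rw [(IsSelfAdjoint.of_nonneg (CFC.sqrt_nonneg (a := x))).star_eq,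
        CFC.sqrt_mul_sqrt_self x hx]
  -- elementary tensor manipulation
  have hstar_elem : ∀ (a : A) (h : H), star (jA a * jH h) = jA (star a) * jH (star h) := by
    intro a h
    rw [star_mul, ← map_star, ← map_star, ← (hjcomm (star a) (star h)).eq]
  have hmul_elem : ∀ (a a' : A) (h h' : H),
      (jA a * jH h) * (jA a' * jH h') = jA (a * a') * jH (h * h') := by
    intro a a' h h'
    rw [(hjcomm a' h).symm.mul_mul_mul_comm, ← map_mul, ← map_mul]
  -- key slice identity 1 : Φ₂ (m₁₂ t * k₃ h') = φ h' • t
  have hkey1 : ∀ (h' : H) (t : T2), Φ₂ (m₁₂ t * k₃ h') = φ h' • t := by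
    intro h'
    refine aux_dense_ext (f := fun t => Φ₂ (m₁₂ t * k₃ h')) (g := fun t => φ h' • t) hjdense
      (Φ₂.continuous.comp ((map_continuous m₁₂).mul continuous_const))
      (continuous_const_smul _) ?_
    intro t ht
    induction ht using Submodule.span_induction with
    | mem x hx =>
      obtain ⟨a, h, rfl⟩ := hx
      beta_reduce
      rw [hm₁₂, hΦ₂]
    | zero => simp
    | add x y hx hy ihx ihy => simp only [map_add, add_mul, ihx, ihy, smul_add]
    | smul c x hx ih =>
      simp only [map_smul, smul_mul_assoc, ih]
      rw [smul_comm]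
  -- key slice identity 2 : Φ₂ (k₁ a * m₂₃ s) = jA a * jH (P₁ s)
  have hkey2 : ∀ (a : A) (s : TH2), Φ₂ (k₁ a * m₂₃ s) = jA a * jH (P₁ s) := by
    intro a
    refine aux_dense_ext (f := fun s => Φ₂ (k₁ a * m₂₃ s)) (g := fun s => jA a * jH (P₁ s))
      hddense (Φ₂.continuous.comp (continuous_const.mul (map_continuous m₂₃)))
      (by exact continuous_const.mul ((map_continuous jH).comp P₁.continuous)) ?_
    intro s hs
    induction hs using Submodule.span_induction with
    | mem x hx =>
      obtain ⟨h, h', rfl⟩ := hx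
      beta_reduce
      rw [hm₂₃, ← mul_assoc, hΦ₂, hP₁, map_smul, mul_smul_comm]
    | zero => simp
    | add x y hx hy ihx ihy => simp only [map_add, mul_add, ihx, ihy]
    | smul c x hx ih => simp only [map_smul, mul_smul_comm, ih]
  -- Φ₂ ∘ β = α ∘ Φ
  have hkey3 : ∀ t : T2, Φ₂ (β t) = α (Φ t) := by
    refine aux_dense_ext (f := fun t => Φ₂ (β t)) (g := fun t => α (Φ t)) hjdense
      (Φ₂.continuous.comp (map_continuous β)) ((map_continuous α).comp Φ.continuous) ?_
    intro t ht
    induction ht using Submodule.span_induction with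
    | mem x hx =>
      obtain ⟨a, h, rfl⟩ := hx
      beta_reduce
      rw [hβ, hkey1, hΦ, map_smul]
    | zero => simp
    | add x y hx hy ihx ihy => simp only [map_add, ihx, ihy]
    | smul c x hx ih => simp only [map_smul, ih]
  -- Φ₂ ∘ γ = jA ∘ Φ
  have hkey4 : ∀ t : T2, Φ₂ (γ t) = jA (Φ t) := by
    refine aux_dense_ext (f := fun t => Φ₂ (γ t)) (g := fun t => jA (Φ t)) hjdense
      (Φ₂.continuous.comp (map_continuous γ)) ((map_continuous jA).comp Φ.continuous) ?_
    intro t ht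
    induction ht using Submodule.span_induction with
    | mem x hx =>
      obtain ⟨a, h, rfl⟩ := hx
      beta_reduce
      rw [hγ, hkey2, hHaar₁, hΦ, map_smul, map_smul, map_one, mul_smul_comm, mul_one]
    | zero => simp
    | add x y hx hy ihx ihy => simp only [map_add, ihx, ihy]
    | smul c x hx ih => simp only [map_smul, ih]
  -- range of E lands in the fixed point algebra
  have prop5 : ∀ a : A, α (E a) = jA (E a) := by
    intro a
    show α (Φ (α a)) = jA (Φ (α a))
    rw [← hkey3, hcoact, hkey4]
  have hone : ∀ b : A, Φ (jA b) = b := by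
    intro b
    have : jA b = jA b * jH 1 := by rw [map_one, mul_one]
    rw [this, hΦ, hφ1, one_smul]
  have prop6 : ∀ a : A, α a = jA a → E a = a := by
    intro a ha
    show Φ (α a) = a
    rw [ha, hone]
  have prop2 : ∀ a : A, E (E a) = E a := fun a => prop6 _ (prop5 a)
  -- the bimodule property
  have hkey5 : ∀ (b c : A) (t : T2), Φ (jA b * t * jA c) = b * Φ t * c := by
    intro b c
    refine aux_dense_ext (f := fun t => Φ (jA b * t * jA c)) (g := fun t => b * Φ t * c)
      hjdense (Φ.continuous.comp ((continuous_const.mul continuous_id).mul continuous_const))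
      ((continuous_const.mul Φ.continuous).mul continuous_const) ?_
    intro t ht
    induction ht using Submodule.span_induction with
    | mem x hx =>
      obtain ⟨a, h, rfl⟩ := hx
      beta_reduce
      have : jA b * (jA a * jH h) * jA c = jA (b * a * c) * jH h := by
        rw [← mul_assoc, ← map_mul, mul_assoc, ← (hjcomm c h).eq, ← mul_assoc, ← map_mul]
      rw [this, hΦ, hΦ, mul_smul_comm, smul_mul_assoc]
    | zero => simp
    | add x y hx hy ihx ihy => simp only [mul_add, add_mul, map_add, ihx, ihy]
    | smul c' x hx ih => simp only [mul_smul_comm, smul_mul_assoc, map_smul, ih]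
  have prop7 : ∀ a b c : A, α b = jA b → α c = jA c → E (b * a * c) = b * E a * c := by
    intro a b c hb hc
    show Φ (α (b * a * c)) = b * Φ (α a) * c
    rw [map_mul α (b * a) c, map_mul α b a, hb, hc, hkey5]
  -- star preservation
  have hconj : ∀ h : H, φ (star h) = starRingEnd ℂ (φ h) := by
    intro h
    have := aux_state_conj φ hφpos h 1
    simpa using this
  have hkey6 : ∀ t : T2, Φ (star t) = star (Φ t) := by
    refine aux_dense_ext (f := fun t => Φ (star t)) (g := fun t => star (Φ t)) hjdense
      (Φ.continuous.comp continuous_star) (continuous_star.comp Φ.continuous) ?_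
    intro t ht
    induction ht using Submodule.span_induction with
    | mem x hx =>
      obtain ⟨a, h, rfl⟩ := hx
      beta_reduce
      rw [hstar_elem, hΦ, hΦ, hconj, star_smul, RCLike.star_def]
    | zero => simp
    | add x y hx hy ihx ihy => simp only [star_add, map_add, ihx, ihy]
    | smul c x hx ih => simp only [star_smul, map_smul, ih, RCLike.star_def]
  have hEstar : ∀ a : A, E (star a) = star (E a) := by
    intro a
    show Φ (α (star a)) = star (Φ (α a))
    rw [map_star, hkey6]
  -- comparison with the slices over states of A
  have hkey7 : ∀ ψ : A →L[ℂ] ℂ, IsState ψ → ∀ t : T2, ψ (Φ t) = φ (R ψ t) := by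
    intro ψ hψ
    refine aux_dense_ext (f := fun t => ψ (Φ t)) (g := fun t => φ (R ψ t)) hjdense
      (ψ.continuous.comp Φ.continuous) (φ.continuous.comp (R ψ).continuous) ?_
    intro t ht
    induction ht using Submodule.span_induction with
    | mem x hx =>
      obtain ⟨a, h, rfl⟩ := hx
      beta_reduce
      rw [hΦ, hRform ψ hψ, map_smul, map_smul, smul_eq_mul, smul_eq_mul, mul_comm]
    | zero => simp
    | add x y hx hy ihx ihy => simp only [map_add, ihx, ihy]
    | smul c x hx ih => simp only [map_smul, ih]
  -- positivity of the slice map Φ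
  have hΦpos : ∀ x : T2, IsPos x → 0 ≤ Φ x := by
    rintro x ⟨t, rfl⟩
    have htmem : t ∈ closure (Submodule.span ℂ
        {t : T2 | ∃ (a : A) (h : H), t = jA a * jH h} : Set T2) := by
      rw [hjdense]; exact Set.mem_univ t
    obtain ⟨u, humem, hulim⟩ := mem_closure_iff_seq_limit.mp htmem
    have hterm : ∀ n, 0 ≤ Φ (star (u n) * u n) := by
      intro n
      obtain ⟨m, c, g, hg⟩ := Submodule.mem_span_set'.mp (humem n)
      have hgi : ∀ i, ∃ (a : A) (h : H), (g i : T2) = jA a * jH h := fun i => (g i).2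
      choose av hv hgi' using hgi
      have hu : u n = ∑ i, jA (c i • av i) * jH (hv i) := by
        rw [← hg]
        refine Finset.sum_congr rfl fun i _ => ?_
        rw [hgi' i, map_smul, smul_mul_assoc]
      have hexp : Φ (star (u n) * u n)
          = ∑ i, ∑ j, φ (star (hv i) * hv j) • (star (c i • av i) * (c j • av j)) := by
        rw [hu, star_sum, Finset.sum_mul, map_sum]
        refine Finset.sum_congr rfl fun i _ => ?_
        rw [Finset.mul_sum, map_sum]
        refine Finset.sum_congr rfl fun j _ => ?_
        rw [hstar_elem, hmul_elem, hΦ]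
      rw [hexp]
      exact aux_gram φ hφpos _ _
    have hlim2 : Filter.Tendsto (fun n => Φ (star (u n) * u n)) Filter.atTop
        (nhds (Φ (star t * t))) := by
      have h1 : Filter.Tendsto (fun n => star (u n) * u n) Filter.atTop (nhds (star t * t)) :=
        Filter.Tendsto.mul ((continuous_star.tendsto t).comp hulim) hulim
      exact (Φ.continuous.tendsto _).comp h1
    exact CStarAlgebra.isClosed_nonneg.mem_of_tendsto hlim2
      (Filter.Eventually.of_forall hterm)
  -- positivity of E
  have prop3 : ∀ a : A, IsPos a → IsPos (E a) := by
    rintro a ⟨y, rfl⟩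
    rw [isPos_iff]
    exact hΦpos _ ⟨α y, by rw [map_mul, map_star]⟩
  -- faithfulness of E
  have prop1 : ∀ a : A, IsPos a → E a = 0 → a = 0 := by
    rintro a ha hEa
    have hx : IsPos (α a) := by
      obtain ⟨y, rfl⟩ := ha
      exact ⟨α y, by rw [map_mul, map_star]⟩
    have hz : α a = 0 := by
      refine hRsep _ hx ?_
      intro ψ hψ
      have h1 : φ (R ψ (α a)) = 0 := by
        rw [← hkey7 ψ hψ]
        show ψ (Φ (α a)) = 0
        have : Φ (α a) = 0 := hEa
        rw [this, map_zero]
      obtain ⟨k, hk⟩ := hRpos ψ hψ _ hx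
      have hk0 : k = 0 := hφfaithful k (by rw [← hk]; exact h1)
      rw [hk, hk0]
      simp
    have := hcounit a
    rw [hz, map_zero] at this
    exact this.symm
  -- linearity helpers for E
  have hEsub : ∀ x y : A, E (x - y) = E x - E y := by
    intro x y
    show Φ (α (x - y)) = Φ (α x) - Φ (α y)
    rw [map_sub, map_sub]
  have hEadd : ∀ x y : A, E (x + y) = E x + E y := by
    intro x y
    show Φ (α (x + y)) = Φ (α x) + Φ (α y)
    rw [map_add, map_add]
  have hE1 : E 1 = 1 := by
    show Φ (α 1) = 1
    rw [map_one, ← map_one jA, hone]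
  have hmono : ∀ x y : A, x ≤ y → E x ≤ E y := by
    intro x y hxy
    have h1 : IsPos (y - x) := (isPos_iff _).mpr (sub_nonneg.mpr hxy)
    have h2 : 0 ≤ E (y - x) := (isPos_iff _).mp (prop3 _ h1)
    rw [hEsub] at h2
    exact sub_nonneg.mp h2
  have hEsmulR : ∀ (r : ℝ) (x : A), E (r • x) = r • E x := by
    intro r x
    show Φ (α (r • x)) = r • Φ (α x)
    rw [← algebraMap_smul ℂ r x, map_smul, map_smul, algebraMap_smul]
  -- contractivity
  have prop4 : ∀ a : A, ‖E a‖ ≤ ‖a‖ := by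
    intro a
    have hfix : α (E a) = jA (E a) := prop5 a
    have hfixstar : α (star (E a)) = jA (star (E a)) := by
      rw [map_star, map_star, hfix]
    have expand : star (a - E a) * (a - E a)
        = star a * a - star a * E a - star (E a) * a + star (E a) * E a := by
      rw [star_sub]; noncomm_ring
    have h1 : E (star (E a) * a) = star (E a) * E a := by
      have := prop7 a (star (E a)) 1 hfixstar (by rw [map_one, map_one])
      simpa using this
    have h2 : E (star a * E a) = star (E a) * E a := by
      have := prop7 (star a) 1 (E a) (by rw [map_one, map_one]) hfix
      simpa [hEstar] using this
    have h3 : E (star (E a) * E a) = star (E a) * E a := by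
      apply prop6
      rw [map_mul, hfixstar, hfix, map_mul]
    have h4 : 0 ≤ E (star (a - E a) * (a - E a)) :=
      (isPos_iff _).mp (prop3 _ ⟨a - E a, rfl⟩)
    rw [expand, hEadd, hEsub, hEsub, h1, h2, h3] at h4
    have h5 : star (E a) * E a ≤ E (star a * a) := by
      have : E (star a * a) - star (E a) * E a - star (E a) * E a + star (E a) * E a
          = E (star a * a) - star (E a) * E a := by abel
      rw [this] at h4
      exact sub_nonneg.mp h4
    have h6 : ‖star (E a) * E a‖ ≤ ‖E (star a * a)‖ :=
      CStarAlgebra.norm_le_norm_of_nonneg_of_le (star_mul_self_nonneg _) h5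
    have h7 : ‖E (star a * a)‖ ≤ ‖star a * a‖ := by
      have hb : star a * a ≤ algebraMap ℝ A ‖star a * a‖ :=
        IsSelfAdjoint.le_algebraMap_norm_self (IsSelfAdjoint.star_mul_self a)
      have h8 : E (star a * a) ≤ algebraMap ℝ A ‖star a * a‖ := by
        have := hmono _ _ hb
        rwa [Algebra.algebraMap_eq_smul_one, hEsmulR, hE1,
          ← Algebra.algebraMap_eq_smul_one] at this
      have h9 : 0 ≤ E (star a * a) := (isPos_iff _).mp (prop3 _ ⟨a, rfl⟩)
      have hnorm1 : ‖(1 : A)‖ ≤ 1 := by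
        have h := CStarRing.norm_star_mul_self (x := (1 : A))
        rw [star_one, one_mul] at h
        nlinarith [norm_nonneg (1 : A)]
      calc ‖E (star a * a)‖ ≤ ‖algebraMap ℝ A ‖star a * a‖‖ :=
            CStarAlgebra.norm_le_norm_of_nonneg_of_le h9 h8
        _ ≤ ‖star a * a‖ := by
            rw [Algebra.algebraMap_eq_smul_one, norm_smul, Real.norm_eq_abs,
              abs_of_nonneg (norm_nonneg _)]
            exact mul_le_of_le_one_right (norm_nonneg _) hnorm1
    have hsq : ‖E a‖ * ‖E a‖ ≤ ‖a‖ * ‖a‖ := by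
      calc ‖E a‖ * ‖E a‖ = ‖star (E a) * E a‖ := (CStarRing.norm_star_mul_self).symm
        _ ≤ ‖E (star a * a)‖ := h6
        _ ≤ ‖star a * a‖ := h7
        _ = ‖a‖ * ‖a‖ := CStarRing.norm_star_mul_self
    nlinarith [norm_nonneg (E a), norm_nonneg a]
  exact ⟨prop1, prop2, prop3, prop4, prop5, prop6, prop7⟩
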